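/- Assume the Poisson-solution setting below. Then for every f ∈ M₁ one has the identity ℰ_β(f − ŵ, f + ŵ) = 1/c + ℰ_β(f − w̄, f − w̄), where c = ∫_D u ξ dx. Consequently, if ℰ_β(h,h) ≥ 0 for every h ∈ M₀, then ℰ_β(f − ŵ, f + ŵ) ≥ 1/c for every f ∈ M₁. -/

import Mathlib

open MeasureTheory

noncomputable section

/-- Partial derivative of `f` in the `i`-th coordinate direction. -/
def pd {d : ℕ} (f : (Fin d → ℝ) → ℝ) (i : Fin d) (x : Fin d → ℝ) : ℝ :=
  fderiv ℝ f x (Pi.single i 1)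

/-- Divergence of a vector field on `ℝ^d`: `div F = Σ_i ∂_i F_i`. -/
def divg {d : ℕ} (F : (Fin d → ℝ) → (Fin d → ℝ)) (x : Fin d → ℝ) : ℝ :=
  ∑ i, fderiv ℝ (fun y => F y i) x (Pi.single i 1)

/-- The vector field `a∇g`, i.e. `(a∇g)_i = Σ_j a_{ij} ∂_j g`. -/
def aGrad {d : ℕ} (a : (Fin d → ℝ) → Matrix (Fin d) (Fin d) ℝ)
    (g : (Fin d → ℝ) → ℝ) (x : Fin d → ℝ) : Fin d → ℝ :=
  fun i => ∑ j, a x i j * pd g j x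

/-- The operator `Lg = ∇·(a∇g) + b·∇g`. -/
def Lop {d : ℕ} (a : (Fin d → ℝ) → Matrix (Fin d) (Fin d) ℝ)
    (b : (Fin d → ℝ) → (Fin d → ℝ)) (g : (Fin d → ℝ) → ℝ) (x : Fin d → ℝ) : ℝ :=
  divg (aGrad a g) x + ∑ i, b x i * pd g i x

/-- The formal adjoint `L̃f = ∇·(a∇f) − b·∇f − div(b) f`. -/
def Ladj {d : ℕ} (a : (Fin d → ℝ) → Matrix (Fin d) (Fin d) ℝ)
    (b : (Fin d → ℝ) → (Fin d → ℝ)) (f : (Fin d → ℝ) → ℝ) (x : Fin d → ℝ) : ℝ :=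
  divg (aGrad a f) x - (∑ i, b x i * pd f i x) - divg b x * f x

/-- `∇f · a ∇g = Σ_{i,j} (∂_i f) a_{ij} (∂_j g)`. -/
def quadF {d : ℕ} (a : (Fin d → ℝ) → Matrix (Fin d) (Fin d) ℝ)
    (f g : (Fin d → ℝ) → ℝ) (x : Fin d → ℝ) : ℝ :=
  ∑ i, ∑ j, pd f i x * a x i j * pd g j x

/-- `f` is C² on an open neighborhood of the closure of `D`. -/
def C2Near {d : ℕ} (D : Set (Fin d → ℝ)) (f : (Fin d → ℝ) → ℝ) : Prop :=
  ∃ U : Set (Fin d → ℝ), IsOpen U ∧ closure D ⊆ U ∧ ContDiffOn ℝ 2 f U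

/-- A vector field is C¹ on an open neighborhood of the closure of `D`. -/
def C1NearVF {d : ℕ} (D : Set (Fin d → ℝ)) (F : (Fin d → ℝ) → (Fin d → ℝ)) : Prop :=
  ∃ U : Set (Fin d → ℝ), IsOpen U ∧ closure D ⊆ U ∧ ∀ i, ContDiffOn ℝ 1 (fun x => F x i) U

/-- `D` has the divergence property: `∫_D div F = 0` for every vector field `F` which is
C¹ on an open neighborhood of the closure of `D` and vanishes on the frontier of `D`. -/
def DivProp {d : ℕ} (D : Set (Fin d → ℝ)) : Prop :=
  ∀ F : (Fin d → ℝ) → (Fin d → ℝ), C1NearVF D F → (∀ x ∈ frontier D, F x = 0) →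
    ∫ x in D, divg F x = 0

/-- The bilinear form `ℰ_β(f,g) = ∫_D f ((β−L)g) dx`. -/
def Eform {d : ℕ} (D : Set (Fin d → ℝ)) (a : (Fin d → ℝ) → Matrix (Fin d) (Fin d) ℝ)
    (b : (Fin d → ℝ) → (Fin d → ℝ)) (β : ℝ) (f g : (Fin d → ℝ) → ℝ) : ℝ :=
  ∫ x in D, f x * (β * g x - Lop a b g x)

/-- `M_δ`: functions that are C² near the closure of `D`, vanish on `∂D`, and have
`∫_D h ξ dx = δ`. -/
def MemM {d : ℕ} (D : Set (Fin d → ℝ)) (ξ : (Fin d → ℝ) → ℝ) (δ : ℝ)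
    (h : (Fin d → ℝ) → ℝ) : Prop :=
  C2Near D h ∧ (∀ x ∈ frontier D, h x = 0) ∧ (∫ x in D, h x * ξ x) = δ

/-! ### Auxiliary lemmas -/

section Aux

variable {d : ℕ} {U : Set (Fin d → ℝ)} {x : Fin d → ℝ}

lemma pd_add' {f g : (Fin d → ℝ) → ℝ} (hf : DifferentiableAt ℝ f x)
    (hg : DifferentiableAt ℝ g x) (i : Fin d) :
    pd (fun y => f y + g y) i x = pd f i x + pd g i x := by
  unfold pd; rw [fderiv_fun_add hf hg]; simp

lemma pd_sub' {f g : (Fin d → ℝ) → ℝ} (hf : DifferentiableAt ℝ f x)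
    (hg : DifferentiableAt ℝ g x) (i : Fin d) :
    pd (fun y => f y - g y) i x = pd f i x - pd g i x := by
  unfold pd; rw [fderiv_fun_sub hf hg]; simp

lemma pd_cmul' {f : (Fin d → ℝ) → ℝ} (hf : DifferentiableAt ℝ f x) (k : ℝ) (i : Fin d) :
    pd (fun y => k * f y) i x = k * pd f i x := by
  unfold pd; rw [fderiv_const_mul hf k]; simp

lemma pd_mul' {f g : (Fin d → ℝ) → ℝ} (hf : DifferentiableAt ℝ f x)
    (hg : DifferentiableAt ℝ g x) (i : Fin d) :
    pd (fun y => f y * g y) i x = f x * pd g i x + g x * pd f i x := by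
  unfold pd; rw [fderiv_fun_mul hf hg]; simp

lemma pd_contDiffOn (hU : IsOpen U) {f : (Fin d → ℝ) → ℝ}
    (hf : ContDiffOn ℝ 2 f U) (i : Fin d) : ContDiffOn ℝ 1 (pd f i) U := by
  unfold pd
  exact (hf.fderiv_of_isOpen hU (by norm_num)).clm_apply contDiffOn_const

lemma aGrad_contDiffOn (hU : IsOpen U) {a : (Fin d → ℝ) → Matrix (Fin d) (Fin d) ℝ}
    (ha : ∀ i j, ContDiff ℝ 1 fun y => a y i j) {g : (Fin d → ℝ) → ℝ}
    (hg : ContDiffOn ℝ 2 g U) (i : Fin d) :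
    ContDiffOn ℝ 1 (fun y => aGrad a g y i) U := by
  unfold aGrad
  exact ContDiffOn.sum fun j _ => ((ha i j).contDiffOn).mul (pd_contDiffOn hU hg j)

lemma diffAt_of_c2 (hU : IsOpen U) (hx : x ∈ U) {f : (Fin d → ℝ) → ℝ}
    (hf : ContDiffOn ℝ 2 f U) : DifferentiableAt ℝ f x :=
  (hf.contDiffAt (hU.mem_nhds hx)).differentiableAt (by norm_num)

lemma diffAt_aGrad (hU : IsOpen U) (hx : x ∈ U) {a : (Fin d → ℝ) → Matrix (Fin d) (Fin d) ℝ}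
    (ha : ∀ i j, ContDiff ℝ 1 fun y => a y i j) {g : (Fin d → ℝ) → ℝ}
    (hg : ContDiffOn ℝ 2 g U) (i : Fin d) :
    DifferentiableAt ℝ (fun y => aGrad a g y i) x :=
  ((aGrad_contDiffOn hU ha hg i).contDiffAt (hU.mem_nhds hx)).differentiableAt one_ne_zero

lemma divg_congr' (hU : IsOpen U) (hx : x ∈ U) (F G : (Fin d → ℝ) → (Fin d → ℝ))
    (h : ∀ y ∈ U, ∀ i, F y i = G y i) : divg F x = divg G x := by
  unfold divg
  refine Finset.sum_congr rfl fun i _ => ?_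
  have he : (fun y => F y i) =ᶠ[nhds x] fun y => G y i :=
    Filter.eventuallyEq_of_mem (hU.mem_nhds hx) fun y hy => h y hy i
  rw [he.fderiv_eq]

lemma Lop_add (hU : IsOpen U) (hx : x ∈ U) {a : (Fin d → ℝ) → Matrix (Fin d) (Fin d) ℝ}
    (ha : ∀ i j, ContDiff ℝ 1 fun y => a y i j) {b : (Fin d → ℝ) → (Fin d → ℝ)}
    {g1 g2 : (Fin d → ℝ) → ℝ} (h1 : ContDiffOn ℝ 2 g1 U) (h2 : ContDiffOn ℝ 2 g2 U) :
    Lop a b (fun y => g1 y + g2 y) x = Lop a b g1 x + Lop a b g2 x := by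
  have hpd : ∀ y ∈ U, ∀ j, pd (fun z => g1 z + g2 z) j y = pd g1 j y + pd g2 j y :=
    fun y hy j => pd_add' (diffAt_of_c2 hU hy h1) (diffAt_of_c2 hU hy h2) j
  have hag : ∀ y ∈ U, ∀ i, aGrad a (fun z => g1 z + g2 z) y i
      = aGrad a g1 y i + aGrad a g2 y i := by
    intro y hy i
    unfold aGrad
    rw [← Finset.sum_add_distrib]
    exact Finset.sum_congr rfl fun j _ => by rw [hpd y hy j]; ring
  have h3 := divg_congr' hU hx (aGrad a (fun z => g1 z + g2 z))
    (fun y i => aGrad a g1 y i + aGrad a g2 y i) hag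
  have h4 : divg (fun y i => aGrad a g1 y i + aGrad a g2 y i) x
      = divg (aGrad a g1) x + divg (aGrad a g2) x := by
    unfold divg
    rw [← Finset.sum_add_distrib]
    refine Finset.sum_congr rfl fun i _ => ?_
    rw [fderiv_fun_add (diffAt_aGrad hU hx ha h1 i) (diffAt_aGrad hU hx ha h2 i)]
    simp
  have h5 : ∑ i, b x i * pd (fun z => g1 z + g2 z) i x
      = (∑ i, b x i * pd g1 i x) + ∑ i, b x i * pd g2 i x := by
    rw [← Finset.sum_add_distrib]
    exact Finset.sum_congr rfl fun i _ => by rw [hpd x hx i]; ring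
  unfold Lop
  rw [h3, h4, h5]; ring

lemma Lop_cmul (hU : IsOpen U) (hx : x ∈ U) {a : (Fin d → ℝ) → Matrix (Fin d) (Fin d) ℝ}
    (ha : ∀ i j, ContDiff ℝ 1 fun y => a y i j) {b : (Fin d → ℝ) → (Fin d → ℝ)}
    {g : (Fin d → ℝ) → ℝ} (hg : ContDiffOn ℝ 2 g U) (k : ℝ) :
    Lop a b (fun y => k * g y) x = k * Lop a b g x := by
  have hpd : ∀ y ∈ U, ∀ j, pd (fun z => k * g z) j y = k * pd g j y :=
    fun y hy j => pd_cmul' (diffAt_of_c2 hU hy hg) k j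
  have hag : ∀ y ∈ U, ∀ i, aGrad a (fun z => k * g z) y i = k * aGrad a g y i := by
    intro y hy i
    unfold aGrad
    rw [Finset.mul_sum]
    exact Finset.sum_congr rfl fun j _ => by rw [hpd y hy j]; ring
  have h3 := divg_congr' hU hx (aGrad a (fun z => k * g z))
    (fun y i => k * aGrad a g y i) hag
  have h4 : divg (fun y i => k * aGrad a g y i) x = k * divg (aGrad a g) x := by
    unfold divg
    rw [Finset.mul_sum]
    refine Finset.sum_congr rfl fun i _ => ?_
    rw [fderiv_const_mul (diffAt_aGrad hU hx ha hg i) k]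
    simp
  have h5 : ∑ i, b x i * pd (fun z => k * g z) i x = k * ∑ i, b x i * pd g i x := by
    rw [Finset.mul_sum]
    exact Finset.sum_congr rfl fun i _ => by rw [hpd x hx i]; ring
  unfold Lop
  rw [h3, h4, h5]; ring

lemma quadF_symm {a : (Fin d → ℝ) → Matrix (Fin d) (Fin d) ℝ}
    (hsym : ∀ y i j, a y i j = a y j i) (f g : (Fin d → ℝ) → ℝ) :
    quadF a g f x = quadF a f g x := by
  unfold quadF
  rw [Finset.sum_comm]
  exact Finset.sum_congr rfl fun i _ => Finset.sum_congr rfl fun j _ => by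
    rw [hsym x j i]; ring

lemma sum_aGrad_eq_quadF {a : (Fin d → ℝ) → Matrix (Fin d) (Fin d) ℝ}
    (f g : (Fin d → ℝ) → ℝ) :
    ∑ i, aGrad a g x i * pd f i x = quadF a f g x := by
  unfold quadF aGrad
  refine Finset.sum_congr rfl fun i _ => ?_
  rw [Finset.sum_mul]
  exact Finset.sum_congr rfl fun j _ => by ring

/-- The key pointwise divergence identity. -/
lemma divF_eq (hU : IsOpen U) (hx : x ∈ U)
    {a : (Fin d → ℝ) → Matrix (Fin d) (Fin d) ℝ}
    (ha : ∀ i j, ContDiff ℝ 1 fun y => a y i j)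
    (hsym : ∀ y i j, a y i j = a y j i)
    {b : (Fin d → ℝ) → (Fin d → ℝ)} (hb : ∀ i, ContDiff ℝ 1 fun y => b y i)
    {f g : (Fin d → ℝ) → ℝ} (hf : ContDiffOn ℝ 2 f U) (hg : ContDiffOn ℝ 2 g U) :
    divg (fun y i => f y * aGrad a g y i - g y * aGrad a f y i + f y * g y * b y i) x
      = f x * Lop a b g x - g x * Ladj a b f x := by
  have df : DifferentiableAt ℝ f x := diffAt_of_c2 hU hx hf
  have dg : DifferentiableAt ℝ g x := diffAt_of_c2 hU hx hg
  have dGg : ∀ i, DifferentiableAt ℝ (fun y => aGrad a g y i) x :=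
    fun i => diffAt_aGrad hU hx ha hg i
  have dGf : ∀ i, DifferentiableAt ℝ (fun y => aGrad a f y i) x :=
    fun i => diffAt_aGrad hU hx ha hf i
  have dbi : ∀ i, DifferentiableAt ℝ (fun y => b y i) x :=
    fun i => ((hb i).differentiable one_ne_zero) x
  have key : ∀ i, pd (fun y => f y * aGrad a g y i - g y * aGrad a f y i
        + f y * g y * b y i) i x
      = (f x * pd (fun y => aGrad a g y i) i x
          - g x * pd (fun y => aGrad a f y i) i x
          + (f x * g x) * pd (fun y => b y i) i x)
        + (aGrad a g x i * pd f i x - aGrad a f x i * pd g i x)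
        + (f x * (b x i * pd g i x) + g x * (b x i * pd f i x)) := by
    intro i
    have dA : DifferentiableAt ℝ (fun y => f y * aGrad a g y i - g y * aGrad a f y i) x :=
      (df.mul (dGg i)).sub (dg.mul (dGf i))
    have dB : DifferentiableAt ℝ (fun y => f y * g y * b y i) x := (df.mul dg).mul (dbi i)
    rw [pd_add' dA dB i, pd_sub' (f := fun y => f y * aGrad a g y i) (g := fun y => g y * aGrad a f y i)
        (df.mul (dGg i)) (dg.mul (dGf i)) i,
      pd_mul' df (dGg i) i, pd_mul' dg (dGf i) i, pd_mul' (f := fun y => f y * g y) (df.mul dg) (dbi i) i,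
      pd_mul' df dg i]
    ring
  have hsum : divg (fun y i => f y * aGrad a g y i - g y * aGrad a f y i
        + f y * g y * b y i) x
      = ∑ i, ((f x * pd (fun y => aGrad a g y i) i x
          - g x * pd (fun y => aGrad a f y i) i x
          + (f x * g x) * pd (fun y => b y i) i x)
        + (aGrad a g x i * pd f i x - aGrad a f x i * pd g i x)
        + (f x * (b x i * pd g i x) + g x * (b x i * pd f i x))) := by
    unfold divg
    exact Finset.sum_congr rfl fun i _ => key i
  rw [hsum]
  have hd1 : divg (aGrad a g) x = ∑ i, pd (fun y => aGrad a g y i) i x := rfl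
  have hd2 : divg (aGrad a f) x = ∑ i, pd (fun y => aGrad a f y i) i x := rfl
  have hd3 : divg b x = ∑ i, pd (fun y => b y i) i x := rfl
  have hq1 := sum_aGrad_eq_quadF (x := x) (a := a) f g
  have hq2 := sum_aGrad_eq_quadF (x := x) (a := a) g f
  have hq3 := quadF_symm (x := x) hsym f g
  unfold Lop Ladj
  rw [hd1, hd2, hd3]
  simp only [Finset.sum_add_distrib, Finset.sum_sub_distrib, ← Finset.mul_sum]
  rw [hq1, hq2, hq3]
  ring

lemma Lop_continuousOn (hU : IsOpen U) {a : (Fin d → ℝ) → Matrix (Fin d) (Fin d) ℝ}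
    (ha : ∀ i j, ContDiff ℝ 1 fun y => a y i j)
    {b : (Fin d → ℝ) → (Fin d → ℝ)} (hb : ∀ i, ContDiff ℝ 1 fun y => b y i)
    {g : (Fin d → ℝ) → ℝ} (hg : ContDiffOn ℝ 2 g U) :
    ContinuousOn (Lop a b g) U := by
  unfold Lop
  apply ContinuousOn.add
  · unfold divg
    refine continuousOn_finset_sum _ fun i _ => ?_
    have h1 : ContinuousOn (fderiv ℝ (fun y => aGrad a g y i)) U :=
      (aGrad_contDiffOn hU ha hg i).continuousOn_fderiv_of_isOpen hU le_rfl
    exact (ContinuousLinearMap.apply ℝ ℝ (Pi.single i 1)).continuous.comp_continuousOn h1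
  · refine continuousOn_finset_sum _ fun i _ => ?_
    exact ((hb i).continuous.continuousOn).mul (pd_contDiffOn hU hg i).continuousOn

lemma Ladj_continuousOn (hU : IsOpen U) {a : (Fin d → ℝ) → Matrix (Fin d) (Fin d) ℝ}
    (ha : ∀ i j, ContDiff ℝ 1 fun y => a y i j)
    {b : (Fin d → ℝ) → (Fin d → ℝ)} (hb : ∀ i, ContDiff ℝ 1 fun y => b y i)
    {g : (Fin d → ℝ) → ℝ} (hg : ContDiffOn ℝ 2 g U) :
    ContinuousOn (Ladj a b g) U := by
  unfold Ladj
  refine ContinuousOn.sub (ContinuousOn.sub ?_ ?_) (ContinuousOn.mul ?_ hg.continuousOn)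
  · unfold divg
    refine continuousOn_finset_sum _ fun i _ => ?_
    have h1 : ContinuousOn (fderiv ℝ (fun y => aGrad a g y i)) U :=
      (aGrad_contDiffOn hU ha hg i).continuousOn_fderiv_of_isOpen hU le_rfl
    exact (ContinuousLinearMap.apply ℝ ℝ (Pi.single i 1)).continuous.comp_continuousOn h1
  · refine continuousOn_finset_sum _ fun i _ => ?_
    exact ((hb i).continuous.continuousOn).mul (pd_contDiffOn hU hg i).continuousOn
  · unfold divg
    refine continuousOn_finset_sum _ fun i _ => ?_
    have h1 : Continuous (fderiv ℝ (fun y => b y i)) := (hb i).continuous_fderiv one_ne_zero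
    exact ((ContinuousLinearMap.apply ℝ ℝ (Pi.single i 1)).continuous.comp h1).continuousOn

lemma integrableOn_of_contOn {D : Set (Fin d → ℝ)} (hDb : Bornology.IsBounded D)
    (hDU : closure D ⊆ U) {h : (Fin d → ℝ) → ℝ} (hh : ContinuousOn h U) :
    IntegrableOn h D := by
  have hK : IsCompact (closure D) :=
    Metric.isCompact_of_isClosed_isBounded isClosed_closure hDb.closure
  exact (ContinuousOn.integrableOn_compact hK (hh.mono hDU)).mono_set subset_closure

/-- Integration by parts: the adjoint identity. -/
lemma adjoint_identity {D : Set (Fin d → ℝ)} (hD : IsOpen D)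
    (hDb : Bornology.IsBounded D) (hdiv : DivProp D)
    {a : (Fin d → ℝ) → Matrix (Fin d) (Fin d) ℝ}
    (ha : ∀ i j, ContDiff ℝ 1 fun y => a y i j)
    (hsym : ∀ y i j, a y i j = a y j i)
    {b : (Fin d → ℝ) → (Fin d → ℝ)} (hb : ∀ i, ContDiff ℝ 1 fun y => b y i) (β : ℝ)
    (hU : IsOpen U) (hDU : closure D ⊆ U)
    {f g : (Fin d → ℝ) → ℝ} (hf : ContDiffOn ℝ 2 f U) (hg : ContDiffOn ℝ 2 g U)
    (hf0 : ∀ x ∈ frontier D, f x = 0) (hg0 : ∀ x ∈ frontier D, g x = 0) :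
    ∫ x in D, f x * (β * g x - Lop a b g x)
      = ∫ x in D, g x * (β * f x - Ladj a b f x) := by
  have hF1 : C1NearVF D (fun y i => f y * aGrad a g y i - g y * aGrad a f y i
      + f y * g y * b y i) := by
    refine ⟨U, hU, hDU, fun i => ?_⟩
    exact (((hf.of_le one_le_two).mul (aGrad_contDiffOn hU ha hg i)).sub
      ((hg.of_le one_le_two).mul (aGrad_contDiffOn hU ha hf i))).add
      (((hf.of_le one_le_two).mul (hg.of_le one_le_two)).mul ((hb i).contDiffOn))
  have hF0 : ∀ x ∈ frontier D, (fun i => f x * aGrad a g x i - g x * aGrad a f x i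
      + f x * g x * b x i) = (0 : Fin d → ℝ) := by
    intro x hx
    funext i
    simp [hf0 x hx, hg0 x hx]
  have hzero := hdiv _ hF1 hF0
  have h1 : ∫ x in D, (f x * Lop a b g x - g x * Ladj a b f x) = 0 := by
    rw [← hzero]
    exact setIntegral_congr_fun hD.measurableSet fun x hx =>
      (divF_eq hU (hDU (subset_closure hx)) ha hsym hb hf hg).symm
  have i1 : IntegrableOn (fun x => f x * (β * g x - Lop a b g x)) D :=
    integrableOn_of_contOn hDb hDU (hf.continuousOn.mul
      ((continuousOn_const.mul hg.continuousOn).sub (Lop_continuousOn hU ha hb hg)))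
  have i2 : IntegrableOn (fun x => g x * (β * f x - Ladj a b f x)) D :=
    integrableOn_of_contOn hDb hDU (hg.continuousOn.mul
      ((continuousOn_const.mul hf.continuousOn).sub (Ladj_continuousOn hU ha hb hf)))
  have h2 := integral_sub i1 i2
  have h3 : (fun x => f x * (β * g x - Lop a b g x) - g x * (β * f x - Ladj a b f x))
      = fun x => -(f x * Lop a b g x - g x * Ladj a b f x) := funext fun x => by ring
  have h4 : ∫ x in D, (f x * (β * g x - Lop a b g x)
      - g x * (β * f x - Ladj a b f x)) = 0 := by
    rw [h3, integral_neg, h1, neg_zero]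
  rw [h4] at h2
  linarith

end Aux

theorem stmt7 {d : ℕ} (D : Set (Fin d → ℝ)) (hD : IsOpen D)
    (hDb : Bornology.IsBounded D) (hdiv : DivProp D)
    (a : (Fin d → ℝ) → Matrix (Fin d) (Fin d) ℝ)
    (ha : ∀ i j, ContDiff ℝ 1 (fun x => a x i j))
    (hsym : ∀ x i j, a x i j = a x j i)
    (b : (Fin d → ℝ) → (Fin d → ℝ)) (hb : ∀ i, ContDiff ℝ 1 (fun x => b x i))
    (β : ℝ) (hβ : 0 ≤ β)
    (ξ : (Fin d → ℝ) → ℝ)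
    (hξ : ∃ U : Set (Fin d → ℝ), IsOpen U ∧ closure D ⊆ U ∧ ContinuousOn ξ U)
    (u ut : (Fin d → ℝ) → ℝ)
    (hu : C2Near D u) (hu0 : ∀ x ∈ frontier D, u x = 0)
    (hueq : ∀ x ∈ D, β * u x - Lop a b u x = ξ x)
    (hut : C2Near D ut) (hut0 : ∀ x ∈ frontier D, ut x = 0)
    (huteq : ∀ x ∈ D, β * ut x - Ladj a b ut x = ξ x)
    (c : ℝ) (hc : c = ∫ x in D, u x * ξ x) (hc0 : c ≠ 0)
    (wbar what : (Fin d → ℝ) → ℝ)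
    (hwbar : ∀ x, wbar x = (u x / c + ut x / c) / 2)
    (hwhat : ∀ x, what x = (u x / c - ut x / c) / 2) :
    (∀ f, MemM D ξ 1 f →
      Eform D a b β (f - what) (f + what)
        = 1 / c + Eform D a b β (f - wbar) (f - wbar)) ∧
    ((∀ h, MemM D ξ 0 h → 0 ≤ Eform D a b β h h) →
      ∀ f, MemM D ξ 1 f → 1 / c ≤ Eform D a b β (f - what) (f + what)) := by
  obtain ⟨Uu, hUu, hDUu, hu2⟩ := hu
  obtain ⟨Uut, hUut, hDUut, hut2⟩ := hut
  obtain ⟨Uξ, hUξ, hDUξ, hξc⟩ := hξ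
  -- ∫ ut ξ = c
  have hc' : (∫ x in D, ut x * ξ x) = c := by
    have hUo : IsOpen (Uu ∩ Uut) := hUu.inter hUut
    have hDU : closure D ⊆ Uu ∩ Uut := fun x hx => ⟨hDUu hx, hDUut hx⟩
    have hadj := adjoint_identity hD hDb hdiv ha hsym hb β hUo hDU
      (hut2.mono Set.inter_subset_right) (hu2.mono Set.inter_subset_left) hut0 hu0
    have l : ∫ x in D, ut x * (β * u x - Lop a b u x) = ∫ x in D, ut x * ξ x :=
      setIntegral_congr_fun hD.measurableSet fun x hx => by rw [hueq x hx]
    have r : ∫ x in D, u x * (β * ut x - Ladj a b ut x) = ∫ x in D, u x * ξ x :=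
      setIntegral_congr_fun hD.measurableSet fun x hx => by rw [huteq x hx]
    rw [l, r, ← hc] at hadj
    exact hadj
  -- main computation, for each f ∈ M₁
  have main : ∀ f, MemM D ξ 1 f →
      (Eform D a b β (f - what) (f + what)
        = 1 / c + Eform D a b β (f - wbar) (f - wbar)) ∧ MemM D ξ 0 (f - wbar) := by
    intro f hfM
    obtain ⟨⟨Uf, hUf, hDUf, hf2⟩, hf0, hfint⟩ := hfM
    set U : Set (Fin d → ℝ) := Uu ∩ Uut ∩ Uξ ∩ Uf with hUdef
    have hUo : IsOpen U := ((hUu.inter hUut).inter hUξ).inter hUf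
    have hDU : closure D ⊆ U := fun x hx => ⟨⟨⟨hDUu hx, hDUut hx⟩, hDUξ hx⟩, hDUf hx⟩
    have hsubu : U ⊆ Uu := fun x hx => hx.1.1.1
    have hsubut : U ⊆ Uut := fun x hx => hx.1.1.2
    have hsubξ : U ⊆ Uξ := fun x hx => hx.1.2
    have hsubf : U ⊆ Uf := fun x hx => hx.2
    have hu2' : ContDiffOn ℝ 2 u U := hu2.mono hsubu
    have hut2' : ContDiffOn ℝ 2 ut U := hut2.mono hsubut
    have hf2' : ContDiffOn ℝ 2 f U := hf2.mono hsubf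
    have hξ' : ContinuousOn ξ U := hξc.mono hsubξ
    set r : (Fin d → ℝ) → ℝ := fun x => f x - wbar x with hr
    have hfw : f - wbar = r := rfl
    have hr2 : ContDiffOn ℝ 2 r U := by
      have : r = fun x => f x - (u x / c + ut x / c) / 2 := by
        funext x; simp only [hr]; rw [hwbar x]
      rw [this]
      exact hf2'.sub (((hu2'.div_const c).add (hut2'.div_const c)).div_const 2)
    have hr0 : ∀ x ∈ frontier D, r x = 0 := by
      intro x hx
      rw [hr]
      simp only [hwbar x, hf0 x hx, hu0 x hx, hut0 x hx]
      norm_num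
    -- continuity / integrability
    have hA_cont : ContinuousOn (fun x => β * r x - Lop a b r x) U :=
      (continuousOn_const.mul hr2.continuousOn).sub (Lop_continuousOn hUo ha hb hr2)
    have int1 : IntegrableOn (fun x => r x * (β * r x - Lop a b r x)) D :=
      integrableOn_of_contOn hDb hDU (hr2.continuousOn.mul hA_cont)
    have int2 : IntegrableOn (fun x => (1/c) * (ut x * (β * r x - Lop a b r x))) D :=
      integrableOn_of_contOn hDb hDU
        (continuousOn_const.mul (hut2'.continuousOn.mul hA_cont))
    have int3 : IntegrableOn (fun x => (1/c) * ((r x + (1/c) * ut x) * ξ x)) D :=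
      integrableOn_of_contOn hDb hDU (continuousOn_const.mul
        ((hr2.continuousOn.add (continuousOn_const.mul hut2'.continuousOn)).mul hξ'))
    have int_fξ : IntegrableOn (fun x => f x * ξ x) D :=
      integrableOn_of_contOn hDb hDU (hf2'.continuousOn.mul hξ')
    have int_uξ : IntegrableOn (fun x => (1/(2*c)) * (u x * ξ x)) D :=
      integrableOn_of_contOn hDb hDU
        (continuousOn_const.mul (hu2'.continuousOn.mul hξ'))
    have int_utξ : IntegrableOn (fun x => (1/(2*c)) * (ut x * ξ x)) D :=
      integrableOn_of_contOn hDb hDU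
        (continuousOn_const.mul (hut2'.continuousOn.mul hξ'))
    have int_rξ : IntegrableOn (fun x => r x * ξ x) D :=
      integrableOn_of_contOn hDb hDU (hr2.continuousOn.mul hξ')
    have int_utξ' : IntegrableOn (fun x => (1/c) * (ut x * ξ x)) D :=
      integrableOn_of_contOn hDb hDU
        (continuousOn_const.mul (hut2'.continuousOn.mul hξ'))
    -- ∫ r ξ = 0
    have hrξ : ∫ x in D, r x * ξ x = 0 := by
      have e : (fun x => r x * ξ x) = fun x =>
          f x * ξ x - ((1/(2*c)) * (u x * ξ x) + (1/(2*c)) * (ut x * ξ x)) :=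
        funext fun x => by rw [hr]; simp only; rw [hwbar x]; ring
      have intsum : IntegrableOn (fun x =>
          (1/(2*c)) * (u x * ξ x) + (1/(2*c)) * (ut x * ξ x)) D := int_uξ.add int_utξ
      rw [e, integral_sub int_fξ intsum, integral_add int_uξ int_utξ,
        integral_const_mul, integral_const_mul, hfint, ← hc, hc']
      field_simp
      ring
    -- ∫ (r + (1/c) ut) ξ = 1
    have hpξ : ∫ x in D, (r x + (1/c) * ut x) * ξ x = 1 := by
      have e : (fun x => (r x + (1/c) * ut x) * ξ x)
          = fun x => r x * ξ x + (1/c) * (ut x * ξ x) := funext fun x => by ring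
      rw [e, integral_add int_rξ int_utξ', integral_const_mul, hrξ, hc']
      field_simp
      norm_num
    -- adjoint: ∫ ut (β r − L r) = ∫ r ξ = 0
    have hutA : ∫ x in D, ut x * (β * r x - Lop a b r x) = 0 := by
      have hadj := adjoint_identity hD hDb hdiv ha hsym hb β hUo hDU hut2' hr2 hut0 hr0
      have e : ∫ x in D, r x * (β * ut x - Ladj a b ut x) = ∫ x in D, r x * ξ x :=
        setIntegral_congr_fun hD.measurableSet fun x hx => by rw [huteq x hx]
      rw [hadj, e, hrξ]
    -- the function identity f + what = r + (1/c) u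
    have efw : f + what = fun x => r x + (1/c) * u x := by
      funext x
      simp only [Pi.add_apply, hr, hwhat x, hwbar x]
      ring
    -- step 1: rewrite the Eform integrand on D
    have step1 : Eform D a b β (f - what) (f + what)
        = ∫ x in D, (r x + (1/c) * ut x)
            * ((β * r x - Lop a b r x) + (1/c) * ξ x) := by
      unfold Eform
      refine setIntegral_congr_fun hD.measurableSet fun x hx => ?_
      have hxU : x ∈ U := hDU (subset_closure hx)
      have h1 : (f - what) x = r x + (1/c) * ut x := by
        simp only [Pi.sub_apply, hr, hwhat x, hwbar x]
        ring
      have hL : Lop a b (fun y => r y + (1/c) * u y) x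
          = Lop a b r x + (1/c) * Lop a b u x := by
        rw [Lop_add hUo hxU ha hr2 (contDiffOn_const.mul hu2'),
          Lop_cmul hUo hxU ha hu2' (1/c)]
      simp only [h1, efw]
      rw [hL, ← hueq x hx]
      ring
    -- step 2: split the integral
    have e3 : ∀ x, (r x + (1/c) * ut x) * ((β * r x - Lop a b r x) + (1/c) * ξ x)
        = r x * (β * r x - Lop a b r x)
          + ((1/c) * (ut x * (β * r x - Lop a b r x))
            + (1/c) * ((r x + (1/c) * ut x) * ξ x)) := fun x => by ring
    have step2 : ∫ x in D, (r x + (1/c) * ut x)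
          * ((β * r x - Lop a b r x) + (1/c) * ξ x)
        = (∫ x in D, r x * (β * r x - Lop a b r x)) + (1/c) := by
      have intsum : IntegrableOn (fun x =>
          (1/c) * (ut x * (β * r x - Lop a b r x))
            + (1/c) * ((r x + (1/c) * ut x) * ξ x)) D := int2.add int3
      simp only [e3]
      rw [integral_add int1 intsum, integral_add int2 int3,
        integral_const_mul, integral_const_mul, hutA, hpξ]
      ring
    have stepE : Eform D a b β (f - wbar) (f - wbar)
        = ∫ x in D, r x * (β * r x - Lop a b r x) := by
      rw [hfw]; rfl
    constructor
    · rw [step1, step2, stepE]; ring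
    · refine ⟨⟨U, hUo, hDU, by rw [hfw]; exact hr2⟩,
        fun x hx => by rw [hfw]; exact hr0 x hx, ?_⟩
      rw [hfw]
      exact hrξ
  constructor
  · exact fun f hf => (main f hf).1
  · intro hpos f hf
    obtain ⟨h1, h2⟩ := main f hf
    have := hpos (f - wbar) h2
    rw [h1]
    linarith
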